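/- Let q, M ≥ 1 and let α : ℤ/qℤ × {1,…,M} → [0,1]. For (x,y) ∈ ℤ/qℤ × {−M,…,M}, define α̃(x,y) as the maximum of α(a,i) + α(a',i') over all pairs (a,i), (a',i') with α(a,i) > 0, α(a',i') > 0, a − a' = x, and i − i' ∈ {y, y−1} (with α̃(x,y) = 0 if no such pair exists). Then Σ_{x,y} α̃(x,y) ≥ 4 · Σ_{a,i} α(a,i). -/

import Mathlib

set_option maxHeartbeats 1000000
open MeasureTheory Finset

lemma ind_integral (L c : ℝ) :
    ∫ x in Set.Ioo (0:ℝ) L, (if x < c then (1:ℝ) else 0) = max 0 (min c L) := by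
  have h1 : (fun x : ℝ => if x < c then (1:ℝ) else 0) = (Set.Iio c).indicator (fun _ => (1:ℝ)) := by
    ext x; simp [Set.indicator, Set.mem_Iio]
  rw [h1, MeasureTheory.setIntegral_indicator measurableSet_Iio]
  have h2 : Set.Ioo (0:ℝ) L ∩ Set.Iio c = Set.Ioo 0 (min c L) := by
    ext x; simp [Set.mem_Iio, Set.mem_Ioo]; tauto
  rw [h2, MeasureTheory.setIntegral_const, Real.volume_real_Ioo, smul_eq_mul, mul_one,
    sub_zero, max_comm]

lemma ind_integrable (L c : ℝ) :
    MeasureTheory.IntegrableOn (fun x : ℝ => if x < c then (1:ℝ) else 0) (Set.Ioo 0 L) := by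
  have h1 : (fun x : ℝ => if x < c then (1:ℝ) else 0) = (Set.Iio c).indicator (fun _ => (1:ℝ)) := by
    ext x; simp [Set.indicator, Set.mem_Iio]
  rw [h1]
  exact (MeasureTheory.integrableOn_const (by simp [Real.volume_Ioo])).indicator
    measurableSet_Iio

lemma oneD (M : ℕ) (hM : 1 ≤ M) (β γ D : ℤ → ℝ)
    (hβ : ∀ i, 0 ≤ β i) (hγ : ∀ j, 0 ≤ γ j) (hD0 : ∀ y, 0 ≤ D y)
    (hD : ∀ i j y, i ∈ Icc (1:ℤ) M → j ∈ Icc (1:ℤ) M → 0 < β i → 0 < γ j →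
      (i - j = y ∨ i - j = y - 1) → β i + γ j ≤ D y)
    (hB : 0 < ∑ i ∈ Icc (1:ℤ) M, β i)
    (hBC : ∑ i ∈ Icc (1:ℤ) M, β i ≤ ∑ j ∈ Icc (1:ℤ) M, γ j) :
    3 * (∑ i ∈ Icc (1:ℤ) M, β i) + ∑ j ∈ Icc (1:ℤ) M, γ j ≤
      ∑ y ∈ Icc (-(M:ℤ)) M, D y := by
  have hMZ : (1:ℤ) ≤ (M:ℤ) := by exact_mod_cast hM
  have hne : (Icc (1:ℤ) M).Nonempty := ⟨1, by simp [hMZ]⟩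
  set B := ∑ i ∈ Icc (1:ℤ) M, β i with hBdef
  set C := ∑ j ∈ Icc (1:ℤ) M, γ j with hCdef
  set b := (Icc (1:ℤ) M).sup' hne β with hbdef
  set c := (Icc (1:ℤ) M).sup' hne γ with hcdef
  -- positivity of b and c
  have hbpos : 0 < b := by
    by_contra h
    push_neg at h
    have : B ≤ 0 := Finset.sum_nonpos fun i hi => le_trans (Finset.le_sup' β hi) h
    linarith
  have hC : 0 < C := lt_of_lt_of_le hB hBC
  have hcpos : 0 < c := by
    by_contra h
    push_neg at h
    have : C ≤ 0 := Finset.sum_nonpos fun j hj => le_trans (Finset.le_sup' γ hj) h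
    linarith
  have hbc : 0 < b + c := by linarith
  set θ := b / (b + c) with hθdef
  have hθpos : 0 < θ := div_pos hbpos hbc
  have hmulθ : (b + c) * θ = b := by rw [hθdef]; field_simp
  have hmul1θ : (b + c) * (1 - θ) = c := by rw [hθdef]; field_simp; ring
  have hθ1 : 1 - θ = c / (b + c) := by rw [hθdef]; field_simp; ring
  have h1θpos : 0 < 1 - θ := by rw [hθ1]; exact div_pos hcpos hbc
  -- the counting inequality, pointwise in l
  have key : ∀ l ∈ Set.Ioo (0:ℝ) (b + c),
      (∑ i ∈ Icc (1:ℤ) M, if l < β i / θ then (1:ℝ) else 0) +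
        (∑ j ∈ Icc (1:ℤ) M, if l < γ j / (1-θ) then (1:ℝ) else 0) ≤
      ∑ y ∈ Icc (-(M:ℤ)) M, if l < D y then (1:ℝ) else 0 := by
    rintro l ⟨hl0, hlL⟩
    rw [Finset.sum_boole, Finset.sum_boole, Finset.sum_boole]
    set I' := (Icc (1:ℤ) M).filter (fun i => l < β i / θ) with hI'
    set J' := (Icc (1:ℤ) M).filter (fun j => l < γ j / (1-θ)) with hJ'
    set Y := (Icc (-(M:ℤ)) M).filter (fun y => l < D y) with hY
    have hI'ne : I'.Nonempty := by
      obtain ⟨i₀, hi₀, hbi⟩ := Finset.exists_mem_eq_sup' hne β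
      exact ⟨i₀, Finset.mem_filter.2 ⟨hi₀, by
        rw [lt_div_iff₀ hθpos, ← hbi, ← hbdef]
        calc l * θ < (b+c) * θ := by exact mul_lt_mul_of_pos_right hlL hθpos
          _ = b := hmulθ⟩⟩
    have hJ'ne : J'.Nonempty := by
      obtain ⟨j₀, hj₀, hcj⟩ := Finset.exists_mem_eq_sup' hne γ
      exact ⟨j₀, Finset.mem_filter.2 ⟨hj₀, by
        rw [lt_div_iff₀ h1θpos, ← hcj, ← hcdef]
        calc l * (1-θ) < (b+c) * (1-θ) := by exact mul_lt_mul_of_pos_right hlL h1θpos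
          _ = c := hmul1θ⟩⟩
    set ip := I'.max' hI'ne with hip
    set jp := J'.max' hJ'ne with hjp
    set W := I'.image (fun i => i - jp) ∪ J'.image (fun j => ip - j + 1) with hW
    have hWcard : W.card = I'.card + J'.card := by
      rw [hW, Finset.card_union_of_disjoint, Finset.card_image_of_injective _
          (fun x y h => by omega), Finset.card_image_of_injective _ (fun x y h => by omega)]
      rw [Finset.disjoint_left]
      rintro a ha1 ha2
      obtain ⟨i, hi, rfl⟩ := Finset.mem_image.1 ha1
      obtain ⟨j, hj, hj2⟩ := Finset.mem_image.1 ha2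
      have h1 : i ≤ ip := Finset.le_max' _ _ hi
      have h2 : j ≤ jp := Finset.le_max' _ _ hj
      omega
    have hWY : W ⊆ Y := by
      intro y hy
      have hipm : ip ∈ I' := Finset.max'_mem _ _
      have hjpm : jp ∈ J' := Finset.max'_mem _ _
      obtain ⟨hipIcc, hipv⟩ := Finset.mem_filter.1 hipm
      obtain ⟨hjpIcc, hjpv⟩ := Finset.mem_filter.1 hjpm
      rw [Finset.mem_Icc] at hipIcc hjpIcc
      rcases Finset.mem_union.1 hy with h | h
      · obtain ⟨i, hi, rfl⟩ := Finset.mem_image.1 h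
        obtain ⟨hiIcc, hiv⟩ := Finset.mem_filter.1 hi
        have hiIcc' := Finset.mem_Icc.1 hiIcc
        have hβi : θ * l < β i := by rwa [lt_div_iff₀ hθpos, mul_comm] at hiv
        have hγj : (1-θ) * l < γ jp := by rwa [lt_div_iff₀ h1θpos, mul_comm] at hjpv
        refine Finset.mem_filter.2 ⟨Finset.mem_Icc.2 (by omega), ?_⟩
        have := hD i jp (i - jp) hiIcc (Finset.mem_filter.1 hjpm).1
          (lt_trans (by positivity) hβi) (lt_trans (by positivity) hγj) (Or.inl rfl)
        have hring : θ * l + (1 - θ) * l = l := by ring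
        linarith
      · obtain ⟨j, hj, rfl⟩ := Finset.mem_image.1 h
        obtain ⟨hjIcc, hjv⟩ := Finset.mem_filter.1 hj
        have hjIcc' := Finset.mem_Icc.1 hjIcc
        have hβi : θ * l < β ip := by rwa [lt_div_iff₀ hθpos, mul_comm] at hipv
        have hγj : (1-θ) * l < γ j := by rwa [lt_div_iff₀ h1θpos, mul_comm] at hjv
        refine Finset.mem_filter.2 ⟨Finset.mem_Icc.2 (by omega), ?_⟩
        have := hD ip j (ip - j + 1) (Finset.mem_filter.1 hipm).1 hjIcc
          (lt_trans (by positivity) hβi) (lt_trans (by positivity) hγj) (Or.inr (by ring))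
        have hring : θ * l + (1 - θ) * l = l := by ring
        linarith
    have : I'.card + J'.card ≤ Y.card := hWcard ▸ Finset.card_le_card hWY
    exact_mod_cast this
  -- integrability
  have intf : ∀ c' : ℝ, IntegrableOn (fun l : ℝ => if l < c' then (1:ℝ) else 0)
      (Set.Ioo 0 (b+c)) := fun c' => ind_integrable _ _
  have intD : Integrable (fun l => ∑ y ∈ Icc (-(M:ℤ)) M, if l < D y then (1:ℝ) else 0)
      (volume.restrict (Set.Ioo 0 (b+c))) :=
    MeasureTheory.integrable_finset_sum _ (fun y _ => intf (D y))
  have intβ : Integrable (fun l => ∑ i ∈ Icc (1:ℤ) M, if l < β i / θ then (1:ℝ) else 0)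
      (volume.restrict (Set.Ioo 0 (b+c))) :=
    MeasureTheory.integrable_finset_sum _ (fun i _ => intf _)
  have intγ : Integrable (fun l => ∑ j ∈ Icc (1:ℤ) M, if l < γ j / (1-θ) then (1:ℝ) else 0)
      (volume.restrict (Set.Ioo 0 (b+c))) :=
    MeasureTheory.integrable_finset_sum _ (fun j _ => intf _)
  have hmono : ∫ l in Set.Ioo (0:ℝ) (b+c),
        ((∑ i ∈ Icc (1:ℤ) M, if l < β i / θ then (1:ℝ) else 0) +
          (∑ j ∈ Icc (1:ℤ) M, if l < γ j / (1-θ) then (1:ℝ) else 0)) ≤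
      ∫ l in Set.Ioo (0:ℝ) (b+c), ∑ y ∈ Icc (-(M:ℤ)) M, if l < D y then (1:ℝ) else 0 :=
    MeasureTheory.setIntegral_mono_on (intβ.add intγ) intD measurableSet_Ioo key
  -- compute left integral
  have hsplit : ∫ l in Set.Ioo (0:ℝ) (b+c),
        ((∑ i ∈ Icc (1:ℤ) M, if l < β i / θ then (1:ℝ) else 0) +
          (∑ j ∈ Icc (1:ℤ) M, if l < γ j / (1-θ) then (1:ℝ) else 0)) =
      B / θ + C / (1-θ) := by
    rw [MeasureTheory.integral_add intβ intγ,
      MeasureTheory.integral_finset_sum _ (fun i _ => intf _),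
      MeasureTheory.integral_finset_sum _ (fun j _ => intf _)]
    have e1 : ∀ i ∈ Icc (1:ℤ) M,
        (∫ l in Set.Ioo (0:ℝ) (b+c), if l < β i / θ then (1:ℝ) else 0) = β i / θ := by
      intro i hi
      rw [ind_integral]
      have h1 : 0 ≤ β i / θ := div_nonneg (hβ i) hθpos.le
      have h2 : β i / θ ≤ b + c := by
        rw [div_le_iff₀ hθpos]
        exact le_trans (Finset.le_sup' β hi) (le_of_eq hmulθ.symm)
      rw [min_eq_left h2, max_eq_right h1]
    have e2 : ∀ j ∈ Icc (1:ℤ) M,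
        (∫ l in Set.Ioo (0:ℝ) (b+c), if l < γ j / (1-θ) then (1:ℝ) else 0) = γ j / (1-θ) := by
      intro j hj
      rw [ind_integral]
      have h1 : 0 ≤ γ j / (1-θ) := div_nonneg (hγ j) h1θpos.le
      have h2 : γ j / (1-θ) ≤ b + c := by
        rw [div_le_iff₀ h1θpos]
        exact le_trans (Finset.le_sup' γ hj) (le_of_eq hmul1θ.symm)
      rw [min_eq_left h2, max_eq_right h1]
    rw [Finset.sum_congr rfl e1, Finset.sum_congr rfl e2, ← Finset.sum_div, ← Finset.sum_div]
  -- right integral bounded by sum of D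
  have hright : (∫ l in Set.Ioo (0:ℝ) (b+c),
        ∑ y ∈ Icc (-(M:ℤ)) M, if l < D y then (1:ℝ) else 0) ≤
      ∑ y ∈ Icc (-(M:ℤ)) M, D y := by
    rw [MeasureTheory.integral_finset_sum _ (fun y _ => intf _)]
    refine Finset.sum_le_sum fun y _ => ?_
    rw [ind_integral]
    exact max_le (hD0 y) (le_trans (min_le_left _ _) le_rfl)
  -- final arithmetic
  have harith : 3 * B + C ≤ B / θ + C / (1-θ) := by
    have eθ : B / θ = B * (b+c) / b := by rw [hθdef, div_div_eq_mul_div]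
    have eθ' : C / (1-θ) = C * (b+c) / c := by rw [hθ1, div_div_eq_mul_div]
    rw [eθ, eθ', div_add_div _ _ hbpos.ne' hcpos.ne', le_div_iff₀ (by positivity)]
    nlinarith [mul_nonneg hB.le (sq_nonneg (c - b)), mul_nonneg (sub_nonneg.2 hBC) (sq_nonneg b)]
  linarith [le_trans hmono hright, hsplit ▸ hmono]

theorem stmt_10 (q M : ℕ) [NeZero q] (hM : 1 ≤ M)
    (α : ZMod q → ℤ → ℝ) (hα : ∀ a i, α a i ∈ Set.Icc (0 : ℝ) 1) :
    4 * ∑ a : ZMod q, ∑ i ∈ Finset.Icc (1 : ℤ) M, α a i ≤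
      ∑ x : ZMod q, ∑ y ∈ Finset.Icc (-(M : ℤ)) M,
        sSup (insert (0 : ℝ) {v : ℝ | ∃ a a' : ZMod q, ∃ i i' : ℤ,
          i ∈ Finset.Icc (1 : ℤ) (M : ℤ) ∧ i' ∈ Finset.Icc (1 : ℤ) (M : ℤ) ∧
          0 < α a i ∧ 0 < α a' i' ∧ a - a' = x ∧ (i - i' = y ∨ i - i' = y - 1) ∧
          v = α a i + α a' i'}) := by
  classical
  set G : ZMod q → ℤ → ℝ := fun x y => sSup (insert (0 : ℝ) {v : ℝ | ∃ a a' : ZMod q, ∃ i i' : ℤ,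
          i ∈ Finset.Icc (1 : ℤ) (M : ℤ) ∧ i' ∈ Finset.Icc (1 : ℤ) (M : ℤ) ∧
          0 < α a i ∧ 0 < α a' i' ∧ a - a' = x ∧ (i - i' = y ∨ i - i' = y - 1) ∧
          v = α a i + α a' i'}) with hGdef
  show 4 * ∑ a : ZMod q, ∑ i ∈ Finset.Icc (1 : ℤ) M, α a i ≤
      ∑ x : ZMod q, ∑ y ∈ Finset.Icc (-(M : ℤ)) M, G x y
  have hbdd : ∀ x y, BddAbove (insert (0 : ℝ) {v : ℝ | ∃ a a' : ZMod q, ∃ i i' : ℤ,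
      i ∈ Finset.Icc (1 : ℤ) (M : ℤ) ∧ i' ∈ Finset.Icc (1 : ℤ) (M : ℤ) ∧
      0 < α a i ∧ 0 < α a' i' ∧ a - a' = x ∧ (i - i' = y ∨ i - i' = y - 1) ∧
      v = α a i + α a' i'}) := by
    intro x y
    refine ⟨2, ?_⟩
    rintro v (rfl | ⟨a, a', i, i', _, _, _, _, _, _, rfl⟩)
    · norm_num
    · have h1 := (hα a i).2
      have h2 := (hα a' i').2
      linarith
  have hG0 : ∀ x y, 0 ≤ G x y := fun x y => le_csSup (hbdd x y) (Set.mem_insert _ _)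
  have hGval : ∀ (x : ZMod q) (y : ℤ) (a a' : ZMod q) (i i' : ℤ),
      i ∈ Finset.Icc (1 : ℤ) (M : ℤ) → i' ∈ Finset.Icc (1 : ℤ) (M : ℤ) →
      0 < α a i → 0 < α a' i' → a - a' = x → (i - i' = y ∨ i - i' = y - 1) →
      α a i + α a' i' ≤ G x y := by
    intro x y a a' i i' hi hi' hp hp' hx hy
    exact le_csSup (hbdd x y) (Set.mem_insert_of_mem _ ⟨a, a', i, i', hi, hi', hp, hp', hx, hy, rfl⟩)
  set Srow : ZMod q → ℝ := fun a => ∑ i ∈ Finset.Icc (1 : ℤ) M, α a i with hSrow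
  have hSrow0 : ∀ a, 0 ≤ Srow a := fun a => Finset.sum_nonneg fun i _ => (hα a i).1
  have : Nonempty (ZMod q) := ⟨0⟩
  obtain ⟨as, -, hmax⟩ := Finset.exists_max_image Finset.univ Srow Finset.univ_nonempty
  have hrow : ∀ a : ZMod q, (if 0 < Srow a then 3 * Srow a + Srow as else 0) ≤
      ∑ y ∈ Finset.Icc (-(M : ℤ)) M, G (a - as) y := by
    intro a
    by_cases hpos : 0 < Srow a
    · rw [if_pos hpos]
      exact oneD M hM (α a) (α as) (fun y => G (a - as) y)
        (fun i => (hα a i).1) (fun j => (hα as j).1) (fun y => hG0 _ y)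
        (fun i j y hi hj hbi hgj hy => hGval (a - as) y a as i j hi hj hbi hgj rfl hy)
        hpos (hmax a (Finset.mem_univ a))
    · rw [if_neg hpos]
      exact Finset.sum_nonneg fun y _ => hG0 _ y
  have hsum : ∑ a : ZMod q, (if 0 < Srow a then 3 * Srow a + Srow as else 0) ≤
      ∑ x : ZMod q, ∑ y ∈ Finset.Icc (-(M : ℤ)) M, G x y := by
    calc ∑ a : ZMod q, (if 0 < Srow a then 3 * Srow a + Srow as else 0)
        ≤ ∑ a : ZMod q, ∑ y ∈ Finset.Icc (-(M : ℤ)) M, G (a - as) y :=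
          Finset.sum_le_sum fun a _ => hrow a
      _ = ∑ x : ZMod q, ∑ y ∈ Finset.Icc (-(M : ℤ)) M, G x y :=
          Fintype.sum_equiv (Equiv.subRight as) _ _ (fun a => rfl)
  -- lower bound for the ite sum
  set P := Finset.univ.filter (fun a : ZMod q => 0 < Srow a) with hP
  have hS : ∑ a ∈ P, Srow a = ∑ a : ZMod q, Srow a := by
    refine Finset.sum_filter_of_ne fun a _ h => ?_
    exact lt_of_le_of_ne (hSrow0 a) (Ne.symm h)
  have hcardS : ∑ a : ZMod q, Srow a ≤ P.card • Srow as := by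
    rw [← hS]
    calc ∑ a ∈ P, Srow a ≤ ∑ _a ∈ P, Srow as :=
          Finset.sum_le_sum fun a _ => hmax a (Finset.mem_univ a)
      _ = P.card • Srow as := Finset.sum_const _
  have hite : ∑ a : ZMod q, (if 0 < Srow a then 3 * Srow a + Srow as else 0) =
      3 * ∑ a : ZMod q, Srow a + P.card • Srow as := by
    rw [← Finset.sum_filter, ← hP, Finset.sum_add_distrib, Finset.sum_const, ← hS,
      Finset.mul_sum]
  have : 4 * ∑ a : ZMod q, Srow a ≤
      ∑ a : ZMod q, (if 0 < Srow a then 3 * Srow a + Srow as else 0) := by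
    rw [hite]
    have := hcardS
    linarith
  exact le_trans this hsum
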